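/- (Brandes's dependency recursion.) For every s, v ∈ V with v ≠ s: δ_{s•}(v) = Σ_{w : v ∈ P_s(w)} (σ_{sv}/σ_{sw}) · (1 + δ_{s•}(w)). -/

import Mathlib

open scoped BigOperators

/-- A directed graph on vertex set `V` with positive real edge weights. -/
structure WDigraph (V : Type*) where
  /-- the edge relation -/
  E : V → V → Prop
  /-- the edge weights -/
  w : V → V → ℝ
  /-- weights of edges are positive -/
  pos : ∀ a b, E a b → 0 < w a b

namespace WDigraph

variable {V : Type*} [Fintype V] [DecidableEq V]

/-- `p` is a simple path from `s` to `t` in `G`: a nonempty list of pairwise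
distinct vertices starting at `s`, ending at `t`, consecutive vertices joined
by edges. (Since all weights are positive, every shortest path is simple, so
it suffices to consider simple paths throughout.) -/
def IsPath (G : WDigraph V) (s t : V) (p : List V) : Prop :=
  List.Chain' G.E p ∧ p.head? = some s ∧ p.getLast? = some t ∧ p.Nodup

/-- The total weight of a list of vertices (sum of the weights of consecutive pairs). -/
def pw (G : WDigraph V) : List V → ℝ
  | [] => 0
  | [_] => 0
  | a :: b :: r => G.w a b + G.pw (b :: r)

/-- `d(s,t)`: shortest-path distance from `s` to `t`, equal to `⊤` (infinity)
if `t` is unreachable from `s`. -/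
noncomputable def dist (G : WDigraph V) (s t : V) : EReal :=
  sInf ((fun p => (G.pw p : EReal)) '' {p | G.IsPath s t p})

/-- The set of shortest `s`-`t` paths in `G`. -/
def SP (G : WDigraph V) (s t : V) : Set (List V) :=
  {p | G.IsPath s t p ∧ (G.pw p : EReal) = G.dist s t}

/-- `σ_{st}`: the number of shortest `s`-`t` paths in `G`. -/
noncomputable def sigma (G : WDigraph V) (s t : V) : ℕ :=
  (G.SP s t).ncard

/-- `σ_{st}(v)`: the number of shortest `s`-`t` paths in `G` that contain `v`. -/
noncomputable def sigmaV (G : WDigraph V) (s t v : V) : ℕ :=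
  {p ∈ G.SP s t | v ∈ p}.ncard

/-- `σ_{st}(v,w)`: the number of shortest `s`-`t` paths in `G` using the edge `(v,w)`. -/
noncomputable def sigmaE (G : WDigraph V) (s t v w : V) : ℕ :=
  {p ∈ G.SP s t | [v, w] <:+: p}.ncard

/-- `P_s(t)`: the set of predecessors of `t` with respect to source `s`:
nodes `y` with `(y,t) ∈ E` and `d(s,y) + ω(y,t) = d(s,t) < ∞`. -/
def pred (G : WDigraph V) (s t : V) : Set V :=
  {y | G.E y t ∧ G.dist s y + (G.w y t : EReal) = G.dist s t ∧ G.dist s t < ⊤}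

/-- `δ_{s•}(v)`: Brandes's one-sided dependency of `s` on `v`
(a summand is `0` whenever its denominator is `0`, which is automatic since
in Lean division by zero yields zero). -/
noncomputable def delta (G : WDigraph V) (s v : V) : ℝ :=
  ∑ᶠ t ∈ {t : V | t ≠ s ∧ t ≠ v}, (G.sigmaV s t v : ℝ) / (G.sigma s t : ℝ)

/-- `c_B(v)`: the betweenness centrality of `v`. -/
noncomputable def bc (G : WDigraph V) (v : V) : ℝ :=
  ∑ᶠ s ∈ {s : V | s ≠ v}, G.delta s v

/-- `G'` is obtained from `G` by the incremental update `(u, v, ω'(u,v))`: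
either a new edge `(u,v) ∉ E` is inserted with positive weight, or the weight
of the existing edge `(u,v)` is decreased; all other edges and weights are
unchanged. (Positivity of all weights is part of the `WDigraph` structure.) -/
structure IsUpdate (G G' : WDigraph V) (u v : V) : Prop where
  /-- the updated edge is present in `G'` -/
  edge' : G'.E u v
  /-- `E' = E ∪ {(u,v)}` -/
  edge_iff : ∀ a b, G'.E a b ↔ G.E a b ∨ a = u ∧ b = v
  /-- `ω'` agrees with `ω` on all edges other than `(u,v)` -/
  weight_eq : ∀ a b, ¬(a = u ∧ b = v) → G'.w a b = G.w a b
  /-- either an insertion of a new edge, or a weight decrease of an existing one -/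
  insert_or_decrease : ¬ G.E u v ∨ (G.E u v ∧ G'.w u v < G.w u v)

/-- `S(t)`: the affected sources of `t`. -/
def affS (G G' : WDigraph V) (t : V) : Set V :=
  {s | G.dist s t > G'.dist s t ∨ G.sigma s t ≠ G'.sigma s t}

/-- `T(s)`: the affected targets of `s`. -/
def affT (G G' : WDigraph V) (s : V) : Set V :=
  {t | G.dist s t > G'.dist s t ∨ G.sigma s t ≠ G'.sigma s t}

/-- `Δ_{s•}(v) = Σ_{t ∈ T(s), t ≠ v} σ_{st}(v)/σ_{st}`, computed in `G`
(`0`-convention for zero denominators). -/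
noncomputable def Delta (G G' : WDigraph V) (s v : V) : ℝ :=
  ∑ᶠ t ∈ {t : V | t ∈ affT G G' s ∧ t ≠ v}, (G.sigmaV s t v : ℝ) / (G.sigma s t : ℝ)

/-- `Δ'_{s•}(v) = Σ_{t ∈ T(s), t ≠ v} σ'_{st}(v)/σ'_{st}`, computed in `G'`
(`0`-convention for zero denominators). -/
noncomputable def Delta' (G G' : WDigraph V) (s v : V) : ℝ :=
  ∑ᶠ t ∈ {t : V | t ∈ affT G G' s ∧ t ≠ v}, (G'.sigmaV s t v : ℝ) / (G'.sigma s t : ℝ)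

section Brandes

open List
set_option linter.unusedSectionVars false

variable {G : WDigraph V} {s t u w x y z : V} {p q r a b : List V}

/-! ### Splitting a list at the first occurrence of an element -/

/-- Everything strictly before the first occurrence of `x`. -/
def cut (p : List V) (x : V) : List V := p.takeWhile (· != x)

/-- Everything strictly after the first occurrence of `x`. -/
def tailAfter (p : List V) (x : V) : List V := (p.dropWhile (· != x)).tail

lemma cut_append {a : List V} (h : x ∉ a) (b : List V) : cut (a ++ x :: b) x = a := by
  induction a with
  | nil => simp [cut]
  | cons y a ih =>
    have hy : y ≠ x := fun hyx => h (by simp [hyx])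
    have hx : x ∉ a := fun hx => h (by simp [hx])
    simpa [cut, List.takeWhile_cons, hy] using ih hx

lemma tailAfter_append {a : List V} (h : x ∉ a) (b : List V) :
    tailAfter (a ++ x :: b) x = b := by
  induction a with
  | nil => simp [tailAfter]
  | cons y a ih =>
    have hy : y ≠ x := fun hyx => h (by simp [hyx])
    have hx : x ∉ a := fun hx => h (by simp [hx])
    simpa [tailAfter, List.dropWhile_cons, hy] using ih hx

lemma split_eq {p : List V} (h : x ∈ p) : p = cut p x ++ x :: tailAfter p x := by
  induction p with
  | nil => simp at h
  | cons y p ih =>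
    by_cases hyx : y = x
    · subst hyx
      simp [cut, tailAfter, List.takeWhile_cons, List.dropWhile_cons]
    · have hx : x ∈ p := by
        rcases List.mem_cons.mp h with h' | h'
        · exact absurd h'.symm hyx
        · exact h'
      have := ih hx
      simp only [cut, tailAfter, List.takeWhile_cons, List.dropWhile_cons]
      have hyx' : (y != x) = true := by simpa using hyx
      simp [hyx']
      exact this

lemma not_mem_cut {p : List V} {x : V} : x ∉ cut p x := by
  intro h
  have := List.mem_takeWhile_imp h
  simp at this

lemma mem_cut_ne {p : List V} {y : V} (h : y ∈ cut p x) : y ≠ x := by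
  have := List.mem_takeWhile_imp h
  simpa using this

/-! ### Weights of lists -/

@[simp] lemma pw_nil : G.pw ([] : List V) = 0 := rfl

@[simp] lemma pw_single : G.pw [x] = 0 := rfl

@[simp] lemma pw_cons_cons {l : List V} : G.pw (x :: y :: l) = G.w x y + G.pw (y :: l) := rfl

lemma pw_nonneg : ∀ {p : List V}, List.Chain' G.E p → 0 ≤ G.pw p
  | [], _ => le_refl _
  | [_], _ => le_refl _
  | a :: b :: l, h => by
    rw [pw_cons_cons]
    have h1 := (List.isChain_cons_cons.mp h).1
    have h2 := (List.isChain_cons_cons.mp h).2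
    have := pw_nonneg h2
    have := G.pos a b h1
    linarith

lemma pw_pos : ∀ {p : List V}, List.Chain' G.E p → 2 ≤ p.length → 0 < G.pw p
  | [], _, hl => by simp at hl
  | [_], _, hl => by simp at hl
  | a :: b :: l, h, _ => by
    rw [pw_cons_cons]
    have h1 := (List.isChain_cons_cons.mp h).1
    have h2 := (List.isChain_cons_cons.mp h).2
    have := pw_nonneg (G := G) h2
    have := G.pos a b h1
    linarith

lemma pw_append_cons : ∀ (a : List V) (x : V) (b : List V),
    G.pw (a ++ x :: b) = G.pw (a ++ [x]) + G.pw (x :: b)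
  | [], x, b => by simp
  | [y], x, b => by simp [pw_cons_cons]
  | y :: z :: a, x, b => by
    have := pw_append_cons (z :: a) x b
    simp only [List.cons_append, pw_cons_cons] at *
    linarith

/-! ### head?, getLast?, Chain' helpers -/

lemma head?_append_cons (a : List V) (x : V) (b c : List V) :
    (a ++ x :: b).head? = (a ++ x :: c).head? := by cases a <;> simp

lemma getLast?_append_cons (a : List V) (x : V) (b : List V) :
    (a ++ x :: b).getLast? = (x :: b).getLast? := by
  obtain ⟨v, hv⟩ : ∃ v, (x :: b).getLast? = some v :=
    ⟨(x :: b).getLast (by simp), List.getLast?_eq_getLast (by simp)⟩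
  rw [List.getLast?_append, hv]
  rfl

lemma eq_dropLast_concat {p : List V} (h : p.getLast? = some y) :
    p = p.dropLast ++ [y] := by
  have hne : p ≠ [] := by rintro rfl; simp at h
  rw [List.getLast?_eq_getLast hne, Option.some_inj] at h
  rw [← h]
  exact (List.dropLast_append_getLast hne).symm

lemma chain'_glue {R : V → V → Prop} {a b : List V}
    (h1 : List.Chain' R (a ++ [x])) (h2 : List.Chain' R (x :: b)) :
    List.Chain' R (a ++ x :: b) := by
  obtain ⟨ha, -, hl⟩ := List.isChain_append.mp h1
  exact List.isChain_append.mpr ⟨ha, h2, by simpa using hl⟩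

lemma chain'_of_append_left {R : V → V → Prop} {a b : List V}
    (h : List.Chain' R (a ++ x :: b)) : List.Chain' R (a ++ [x]) := by
  obtain ⟨ha, -, hl⟩ := List.isChain_append.mp h
  exact List.isChain_append.mpr ⟨ha, List.isChain_singleton x, by simpa using hl⟩

lemma chain'_of_append_right {R : V → V → Prop} {a b : List V}
    (h : List.Chain' R (a ++ x :: b)) : List.Chain' R (x :: b) :=
  (List.isChain_append.mp h).2.1

/-! ### Walks -/

/-- A (not necessarily simple) walk from `s` to `t`. -/
def IsWalk (G : WDigraph V) (s t : V) (p : List V) : Prop :=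
  List.Chain' G.E p ∧ p.head? = some s ∧ p.getLast? = some t

lemma IsPath.isWalk (h : G.IsPath s t p) : G.IsWalk s t p := ⟨h.1, h.2.1, h.2.2.1⟩

lemma exists_dup_decomp : ∀ {l : List V}, ¬ l.Nodup →
    ∃ (a : List V) (y : V) (b c : List V), l = a ++ y :: (b ++ y :: c)
  | [], h => absurd List.nodup_nil h
  | z :: l, h => by
    by_cases hz : z ∈ l
    · exact ⟨[], z, cut l z, tailAfter l z, by simpa using split_eq hz⟩
    · have hnl : ¬ l.Nodup := by
        intro hnd; exact h (List.nodup_cons.mpr ⟨hz, hnd⟩)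
      obtain ⟨a, y, b, c, rfl⟩ := exists_dup_decomp hnl
      exact ⟨z :: a, y, b, c, by simp⟩

lemma decycle_step (hw : G.IsWalk s t p) (hnd : ¬ p.Nodup) :
    ∃ p', G.IsWalk s t p' ∧ p'.length < p.length ∧ G.pw p' < G.pw p := by
  obtain ⟨a, y, b, c, rfl⟩ := exists_dup_decomp hnd
  obtain ⟨hch, hhd, hlast⟩ := hw
  refine ⟨a ++ y :: c, ⟨?_, ?_, ?_⟩, by simp only [List.length_append, List.length_cons]; omega, ?_⟩
  · -- Chain'
    have h1 : List.Chain' G.E (a ++ [y]) := chain'_of_append_left hch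
    have h2 : List.Chain' G.E (y :: (b ++ y :: c)) := chain'_of_append_right hch
    have h3 : List.Chain' G.E (y :: c) := by
      have : List.Chain' G.E ((y :: b) ++ y :: c) := h2
      exact chain'_of_append_right this
    exact chain'_glue h1 h3
  · rw [← hhd]; exact head?_append_cons a y c (b ++ y :: c)
  · rw [← hlast, getLast?_append_cons a y c, getLast?_append_cons a y (b ++ y :: c)]
    have : (y :: (b ++ y :: c)) = (y :: b) ++ y :: c := by simp
    rw [this, getLast?_append_cons (y :: b) y c]
  · -- weight decreases
    have e1 : G.pw (a ++ y :: (b ++ y :: c)) =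
        G.pw (a ++ [y]) + G.pw (y :: (b ++ y :: c)) := pw_append_cons a y _
    have e2 : G.pw ((y :: b) ++ y :: c) = G.pw ((y :: b) ++ [y]) + G.pw (y :: c) :=
      pw_append_cons (y :: b) y c
    have e3 : G.pw (a ++ y :: c) = G.pw (a ++ [y]) + G.pw (y :: c) := pw_append_cons a y c
    have h2 : List.Chain' G.E ((y :: b) ++ y :: c) := chain'_of_append_right hch
    have h4 : List.Chain' G.E ((y :: b) ++ [y]) := chain'_of_append_left h2
    have hpos : 0 < G.pw ((y :: b) ++ [y]) := pw_pos h4 (by simp)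
    have : G.pw (y :: (b ++ y :: c)) = G.pw ((y :: b) ++ [y]) + G.pw (y :: c) := by
      simpa using e2
    rw [e1, e3, this]
    linarith

lemma exists_path_le {p : List V} (hw : G.IsWalk s t p) :
    ∃ q, G.IsPath s t q ∧ G.pw q ≤ G.pw p := by
  by_cases hnd : p.Nodup
  · exact ⟨p, ⟨hw.1, hw.2.1, hw.2.2, hnd⟩, le_rfl⟩
  · obtain ⟨p', hw', hlen, hpw⟩ := decycle_step hw hnd
    obtain ⟨q, hq, hle⟩ := exists_path_le hw'
    exact ⟨q, hq, hle.trans hpw.le⟩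
termination_by p.length
decreasing_by exact hlen

/-! ### Distance basics -/

lemma dist_le_path (h : G.IsPath s t p) : G.dist s t ≤ (G.pw p : EReal) :=
  sInf_le ⟨p, h, rfl⟩

lemma dist_nonneg' (G : WDigraph V) (s t : V) : 0 ≤ G.dist s t := by
  refine le_sInf ?_
  rintro _ ⟨p, hp, rfl⟩
  exact EReal.coe_nonneg.mpr (G.pw_nonneg hp.1)

lemma paths_finite (G : WDigraph V) (s t : V) : {p | G.IsPath s t p}.Finite :=
  (List.finite_length_le V (Fintype.card V)).subset fun p hp => hp.2.2.2.length_le_card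

lemma SP_finite (G : WDigraph V) (s t : V) : (G.SP s t).Finite :=
  (G.paths_finite s t).subset fun _ hp => hp.1

lemma exists_SP (h : G.dist s t < ⊤) : ∃ p, p ∈ G.SP s t := by
  have hne : {p | G.IsPath s t p}.Nonempty := by
    by_contra h'
    rw [Set.not_nonempty_iff_eq_empty] at h'
    have : G.dist s t = ⊤ := by rw [dist, h', Set.image_empty, sInf_empty]
    rw [this] at h
    exact absurd h (lt_irrefl _)
  have hmem := (hne.image (fun p => (G.pw p : EReal))).csInf_mem ((G.paths_finite s t).image _)
  obtain ⟨p, hp, he⟩ := hmem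
  exact ⟨p, hp, he⟩

lemma dist_lt_top_of_SP (hp : p ∈ G.SP s t) : G.dist s t < ⊤ :=
  hp.2 ▸ EReal.coe_lt_top _

lemma dist_le_walk (hw : G.IsWalk s t p) : G.dist s t ≤ (G.pw p : EReal) := by
  obtain ⟨q, hq, hle⟩ := exists_path_le hw
  exact (dist_le_path hq).trans (by exact_mod_cast hle)

lemma walk_extend (hr : G.IsPath s x r) {b : List V} (hc : List.Chain' G.E (x :: b))
    (hl : (x :: b).getLast? = some t) :
    G.IsWalk s t (r ++ b) ∧ G.pw (r ++ b) = G.pw r + G.pw (x :: b) := by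
  have hd : r = r.dropLast ++ [x] := eq_dropLast_concat hr.2.2.1
  have heq : r ++ b = r.dropLast ++ x :: b := by
    conv_lhs => rw [hd]
    simp
  have hch : List.Chain' G.E (r.dropLast ++ [x]) := by rw [← hd]; exact hr.1
  constructor
  · refine ⟨?_, ?_, ?_⟩
    · rw [heq]; exact chain'_glue hch hc
    · rw [List.head?_append, hr.2.1]; rfl
    · rw [heq, getLast?_append_cons, hl]
  · rw [heq, pw_append_cons, ← hd]

/-! ### Subpath optimality and joining -/

lemma SP_of_prefix {a b : List V} (hp : p ∈ G.SP s t) (hdec : p = a ++ x :: b) :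
    (a ++ [x]) ∈ G.SP s x := by
  obtain ⟨⟨hch, hhd, hlast, hnd⟩, hdist⟩ := hp
  subst hdec
  have hch1 : List.Chain' G.E (a ++ [x]) := chain'_of_append_left hch
  have hch2 : List.Chain' G.E (x :: b) := chain'_of_append_right hch
  have hhd1 : (a ++ [x]).head? = some s := by
    rw [← hhd]; exact (head?_append_cons a x [] b)
  have hnd1 : (a ++ [x]).Nodup := by
    rw [List.nodup_append] at hnd ⊢
    refine ⟨hnd.1, List.nodup_singleton x, ?_⟩
    intro y hy z hz
    have : z = x := by simpa using hz
    rw [this]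
    exact hnd.2.2 y hy x (by simp)
  have hpath1 : G.IsPath s x (a ++ [x]) := ⟨hch1, hhd1, by simp, hnd1⟩
  refine ⟨hpath1, ?_⟩
  by_contra hne
  have hlt : G.dist s x < (G.pw (a ++ [x]) : EReal) :=
    lt_of_le_of_ne (dist_le_path hpath1) fun h => hne h.symm
  obtain ⟨r, hr⟩ := G.exists_SP (hlt.trans_le le_top)
  have hrlt : G.pw r < G.pw (a ++ [x]) := by
    have h2 := hr.2
    rw [← h2] at hlt
    exact_mod_cast hlt
  have hlx : (x :: b).getLast? = some t := by
    rw [← getLast?_append_cons a x b]; exact hlast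
  obtain ⟨hwalk, hpw⟩ := walk_extend hr.1 hch2 hlx
  have h1 : G.dist s t ≤ ((G.pw r + G.pw (x :: b) : ℝ) : EReal) := by
    have := dist_le_walk hwalk
    rwa [hpw] at this
  have h3 : G.pw (a ++ x :: b) = G.pw (a ++ [x]) + G.pw (x :: b) := pw_append_cons a x b
  have h4 : G.dist s t < G.dist s t := by
    calc G.dist s t ≤ ((G.pw r + G.pw (x :: b) : ℝ) : EReal) := h1
      _ < ((G.pw (a ++ [x]) + G.pw (x :: b) : ℝ) : EReal) := by
          exact_mod_cast (add_lt_add_iff_right _).mpr hrlt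
      _ = G.dist s t := by rw [← h3]; exact hdist
  exact absurd h4 (lt_irrefl _)

lemma join_SP {b : List V} (hr : r ∈ G.SP s x) (hc : List.Chain' G.E (x :: b))
    (hl : (x :: b).getLast? = some t)
    (hw : ((G.pw r + G.pw (x :: b) : ℝ) : EReal) = G.dist s t) :
    (r ++ b) ∈ G.SP s t := by
  obtain ⟨hwalk, hpw⟩ := walk_extend hr.1 hc hl
  have hnd : (r ++ b).Nodup := by
    by_contra hnd
    obtain ⟨p', hw', hlen, hplt⟩ := decycle_step hwalk hnd
    have h1 : G.dist s t ≤ (G.pw p' : EReal) := dist_le_walk hw'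
    have h2 : (G.pw p' : EReal) < ((G.pw r + G.pw (x :: b) : ℝ) : EReal) := by
      rw [← hpw]; exact_mod_cast hplt
    rw [hw] at h2
    exact absurd (h1.trans_lt h2) (lt_irrefl _)
  refine ⟨⟨hwalk.1, hwalk.2.1, hwalk.2.2, hnd⟩, ?_⟩
  rw [hpw, hw]

/-! ### Predecessor facts -/

lemma pred_dist_lt_top (h : x ∈ G.pred s w) : G.dist s x < ⊤ := by
  obtain ⟨hE, heq, hlt⟩ := h
  by_contra h'
  have hx : G.dist s x = ⊤ := top_le_iff.mp (not_lt.mp h')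
  rw [hx, EReal.top_add_of_ne_bot (by simp)] at heq
  rw [← heq] at hlt
  exact absurd hlt (lt_irrefl _)

lemma SP_pw_eq (hp : p ∈ G.SP s t) (hq : q ∈ G.SP s t) : G.pw p = G.pw q := by
  have h := hp.2.trans hq.2.symm
  exact_mod_cast h

lemma mem_of_SP_last (hp : p ∈ G.SP s t) : t ∈ p :=
  List.mem_of_mem_getLast? hp.1.2.2.1

lemma SP_append_pred (h : x ∈ G.pred s w) (hq : q ∈ G.SP s x) : q ++ [w] ∈ G.SP s w := by
  have hc : List.Chain' G.E [x, w] := List.isChain_cons_cons.mpr ⟨h.1, List.isChain_singleton w⟩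
  have hl : ([x, w] : List V).getLast? = some w := rfl
  have hpw : G.pw [x, w] = G.w x w := by simp
  have hwt : ((G.pw q + G.pw [x, w] : ℝ) : EReal) = G.dist s w := by
    rw [hpw, EReal.coe_add, hq.2, h.2.1]
  exact join_SP hq hc hl hwt

lemma not_mem_SP_pred (h : x ∈ G.pred s w) (hq : q ∈ G.SP s x) : w ∉ q := by
  intro hw
  have hsplit := split_eq hw
  have h1 : cut q w ++ [w] ∈ G.SP s w := SP_of_prefix hq hsplit
  have h2 : q ++ [w] ∈ G.SP s w := SP_append_pred h hq
  have h3 : G.pw (cut q w ++ [w]) = G.pw (q ++ [w]) := SP_pw_eq h1 h2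
  have h4 : G.pw q = G.pw (cut q w ++ [w]) + G.pw (w :: tailAfter q w) := by
    conv_lhs => rw [hsplit]
    exact pw_append_cons _ w _
  have h5 : G.pw (q ++ [w]) = G.pw q + G.w x w := by
    have e1 := h2.2
    rw [← h.2.1, ← hq.2, ← EReal.coe_add] at e1
    exact_mod_cast e1
  have h6 : 0 ≤ G.pw (w :: tailAfter q w) := by
    refine pw_nonneg ?_
    have hc := hq.1.1
    rw [hsplit] at hc
    exact chain'_of_append_right hc
  have h7 : 0 < G.w x w := G.pos x w h.1
  linarith

lemma pred_ne (h : x ∈ G.pred s w) : w ≠ x := by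
  obtain ⟨q, hq⟩ := exists_SP (pred_dist_lt_top h)
  intro he
  subst he
  exact not_mem_SP_pred h hq (mem_of_SP_last hq)

lemma pred_ne_src (h : x ∈ G.pred s w) : w ≠ s := by
  have hps : G.IsPath s s [s] := ⟨List.isChain_singleton s, rfl, rfl, List.nodup_singleton s⟩
  have h0 : G.dist s s ≤ 0 := by
    have hd := dist_le_path hps
    simpa using hd
  have h1 : (0 : EReal) < G.dist s w := by
    rw [← h.2.1]
    calc (0 : EReal) < (G.w x w : EReal) := by exact_mod_cast G.pos x w h.1
      _ = 0 + (G.w x w : EReal) := (zero_add _).symm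
      _ ≤ G.dist s x + (G.w x w : EReal) := add_le_add (G.dist_nonneg' s x) le_rfl
  intro he
  rw [he] at h1
  exact absurd (h1.trans_le h0) (lt_irrefl _)

/-! ### Counting facts -/

lemma sigma_ne_zero (hp : p ∈ G.SP s t) : G.sigma s t ≠ 0 := by
  rw [sigma, Ne, Set.ncard_eq_zero (G.SP_finite s t)]
  intro h
  rw [h] at hp
  exact hp

lemma ncard_prod {α β : Type*} (A : Set α) (B : Set β) :
    (A ×ˢ B).ncard = A.ncard * B.ncard := by
  rw [← Nat.card_coe_set_eq, Nat.card_congr (Equiv.Set.prod A B), Nat.card_prod,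
    Nat.card_coe_set_eq, Nat.card_coe_set_eq]

lemma sigmaV_last (G : WDigraph V) (s w : V) : G.sigmaV s w w = G.sigma s w := by
  rw [sigmaV, sigma]
  congr 1
  ext p
  exact ⟨fun h => h.1, fun h => ⟨h, mem_of_SP_last h⟩⟩

lemma sigmaV_pred_zero (hx : x ∈ G.pred s w) : G.sigmaV s x w = 0 := by
  rw [sigmaV]
  convert Set.ncard_empty (List V)
  rw [Set.eq_empty_iff_forall_notMem]
  rintro p ⟨hp, hw⟩
  exact not_mem_SP_pred hx hp hw

lemma SP_mem_decomp (hp : p ∈ G.SP s t) (hx : x ∈ p) (hxt : x ≠ t) :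
    ∃ y b, p = cut p x ++ x :: (y :: b) ∧ tailAfter p x = y :: b := by
  have hsplit := split_eq hx
  cases hb : tailAfter p x with
  | nil =>
    exfalso
    rw [hb] at hsplit
    have h1 : p.getLast? = some x := by rw [hsplit]; simp
    rw [hp.1.2.2.1] at h1
    exact hxt (Option.some_inj.mp h1).symm
  | cons y b =>
    refine ⟨y, b, ?_, rfl⟩
    rw [← hb]
    exact hsplit

/-- Statement (1): paths through `x` are partitioned by the successor of `x`. -/
lemma sigmaV_eq_sum (G : WDigraph V) (s t x : V) (hxt : x ≠ t) :
    G.sigmaV s t x = ∑ w ∈ (Set.toFinite {w : V | x ∈ G.pred s w}).toFinset,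
      G.sigmaE s t x w := by
  classical
  have hSf : {p | p ∈ G.SP s t ∧ x ∈ p}.Finite :=
    (G.SP_finite s t).subset fun p hp => hp.1
  set F : Finset (List V) := hSf.toFinset with hF
  set f : List V → V := fun p => ((tailAfter p x).head?).getD x with hf
  have hdec : ∀ p ∈ F, ∃ u b : List V, p = u ++ x :: f p :: b ∧ x ∉ u := by
    intro p hpF
    rw [hF, Set.Finite.mem_toFinset] at hpF
    obtain ⟨y, b, h1, h2⟩ := SP_mem_decomp hpF.1 hpF.2 hxt
    have hfy : f p = y := by rw [hf]; simp only; rw [h2]; rfl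
    rw [← hfy] at h1
    exact ⟨cut p x, b, h1, not_mem_cut⟩
  have hmap : ∀ p ∈ F, f p ∈ (Set.toFinite {w : V | x ∈ G.pred s w}).toFinset := by
    intro p hpF
    obtain ⟨u, b, hb, hxu⟩ := hdec p hpF
    rw [hF, Set.Finite.mem_toFinset] at hpF
    rw [Set.Finite.mem_toFinset, Set.mem_setOf_eq]
    have hp := hpF.1
    have h1 : (u ++ [x]) ∈ G.SP s x := SP_of_prefix hp hb
    have hb2 : p = (u ++ [x]) ++ f p :: b := by
      conv_lhs => rw [hb]
      simp
    have h2 : ((u ++ [x]) ++ [f p]) ∈ G.SP s (f p) := SP_of_prefix hp hb2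
    have hE : G.E x (f p) := by
      have hch := hp.1.1
      rw [hb] at hch
      have hc2 := chain'_of_append_right hch
      exact (List.isChain_cons_cons.mp hc2).1
    refine ⟨hE, ?_, dist_lt_top_of_SP h2⟩
    have e1 : G.pw ((u ++ [x]) ++ [f p]) = G.pw (u ++ [x]) + G.w x (f p) := by
      have e := pw_append_cons (G := G) u x [f p]
      have e' : u ++ x :: [f p] = (u ++ [x]) ++ [f p] := by simp
      rw [e'] at e
      rw [e]
      simp
    rw [← h1.2, ← h2.2, e1, EReal.coe_add]
  have hcard := Finset.card_eq_sum_card_fiberwise hmap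
  have hfib : ∀ w, (F.filter (fun p => f p = w)).card = G.sigmaE s t x w := by
    intro w
    have hEf : {p | p ∈ G.SP s t ∧ [x, w] <:+: p}.Finite :=
      (G.SP_finite s t).subset fun p hp => hp.1
    rw [sigmaE, Set.ncard_eq_toFinset_card _ hEf]
    congr 1
    ext p
    rw [Finset.mem_filter, hF, Set.Finite.mem_toFinset, Set.Finite.mem_toFinset]
    constructor
    · rintro ⟨hpF', hfp⟩
      obtain ⟨u, b, hb, hxu⟩ := hdec p (by rw [hF, Set.Finite.mem_toFinset]; exact hpF')
      refine ⟨hpF'.1, u, b, ?_⟩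
      rw [hfp] at hb
      rw [hb]
      simp
    · rintro ⟨hp, u, v, huv⟩
      have hform : p = u ++ x :: (w :: v) := by rw [← huv]; simp
      have hxp : x ∈ p := by rw [hform]; simp
      have hxu : x ∉ u := by
        intro hxu
        have hnd := hp.1.2.2.2
        rw [hform, List.nodup_append] at hnd
        exact hnd.2.2 x hxu x (by simp) rfl
      refine ⟨⟨hp, hxp⟩, ?_⟩
      rw [hf]
      simp only
      rw [hform, tailAfter_append hxu]
      rfl
  have hV : G.sigmaV s t x = F.card := by
    rw [sigmaV, Set.ncard_eq_toFinset_card _ hSf]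
  rw [hV, hcard]
  exact Finset.sum_congr rfl fun w _ => hfib w

/-- Canonical data for a shortest path using the edge `(x,w)`. -/
lemma memA_decomp (hx : x ∈ G.pred s w) (hp : p ∈ G.SP s t) (hin : [x, w] <:+: p) :
    ∃ u v : List V, p = u ++ x :: (w :: v) ∧ cut p x = u ∧ tailAfter p w = v ∧
      (u ++ [x]) ∈ G.SP s x ∧ ((u ++ [x]) ++ [w]) ∈ G.SP s w ∧
      List.Chain' G.E (w :: v) ∧ (w :: v).getLast? = some t ∧
      G.pw p = G.pw ((u ++ [x]) ++ [w]) + G.pw (w :: v) := by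
  obtain ⟨u, v, huv⟩ := hin
  have hform : p = u ++ x :: (w :: v) := by rw [← huv]; simp
  have hform2 : p = (u ++ [x]) ++ w :: v := by rw [hform]; simp
  have hnd := hp.1.2.2.2
  have hxu : x ∉ u := by
    intro hmem
    rw [hform, List.nodup_append] at hnd
    exact hnd.2.2 x hmem x (by simp) rfl
  have hwu : w ∉ u ++ [x] := by
    intro hmem
    rw [hform2, List.nodup_append] at hnd
    exact hnd.2.2 w hmem w (by simp) rfl
  have hcut : cut p x = u := by rw [hform]; exact cut_append hxu _
  have htail : tailAfter p w = v := by rw [hform2]; exact tailAfter_append hwu _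
  have h1 : (u ++ [x]) ∈ G.SP s x := SP_of_prefix hp hform
  have h2 : ((u ++ [x]) ++ [w]) ∈ G.SP s w := SP_of_prefix hp hform2
  have hch : List.Chain' G.E (w :: v) := by
    have hc := hp.1.1
    rw [hform2] at hc
    exact chain'_of_append_right hc
  have hlast : (w :: v).getLast? = some t := by
    have hl := hp.1.2.2.1
    rw [hform2, getLast?_append_cons] at hl
    exact hl
  have hpw : G.pw p = G.pw ((u ++ [x]) ++ [w]) + G.pw (w :: v) := by
    conv_lhs => rw [hform2]
    exact pw_append_cons _ w _
  exact ⟨u, v, hform, hcut, htail, h1, h2, hch, hlast, hpw⟩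

/-- Statement (2): the key product identity. -/
lemma sigmaE_mul_sigma (hx : x ∈ G.pred s w) (t : V) :
    G.sigmaE s t x w * G.sigma s w = G.sigma s x * G.sigmaV s t w := by
  classical
  set A : Set (List V) := {p | p ∈ G.SP s t ∧ [x, w] <:+: p} with hA
  set B : Set (List V) := G.SP s w with hB
  set C : Set (List V) := G.SP s x with hC
  set D : Set (List V) := {p | p ∈ G.SP s t ∧ w ∈ p} with hD
  set Φ : List V × List V → List V × List V :=
    fun pr => (cut pr.1 x ++ [x], pr.2 ++ tailAfter pr.1 w) with hPhi
  have himg : ∀ pr ∈ A ×ˢ B, Φ pr ∈ C ×ˢ D := by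
    rintro ⟨p, r⟩ ⟨hpA, hrB⟩
    obtain ⟨u, v, hform, hcut, htail, h1, h2, hch, hlast, hpw⟩ :=
      memA_decomp hx hpA.1 hpA.2
    have hpwr : G.pw r = G.pw ((u ++ [x]) ++ [w]) := SP_pw_eq hrB h2
    have hrv : r ++ v ∈ G.SP s t := by
      refine join_SP hrB hch hlast ?_
      rw [hpwr, ← hpw]
      exact hpA.1.2
    constructor
    · show cut p x ++ [x] ∈ C
      rw [hcut]; exact h1
    · show r ++ tailAfter p w ∈ D
      rw [htail]
      exact ⟨hrv, List.mem_append_left v (mem_of_SP_last hrB)⟩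
  have hinj : Set.InjOn Φ (A ×ˢ B) := by
    rintro ⟨p₁, r₁⟩ ⟨h1A, h1B⟩ ⟨p₂, r₂⟩ ⟨h2A, h2B⟩ heq
    obtain ⟨u₁, v₁, hform₁, hcut₁, htail₁, -, -, -, -, -⟩ := memA_decomp hx h1A.1 h1A.2
    obtain ⟨u₂, v₂, hform₂, hcut₂, htail₂, -, -, -, -, -⟩ := memA_decomp hx h2A.1 h2A.2
    rw [hPhi] at heq
    simp only [Prod.mk.injEq, hcut₁, hcut₂, htail₁, htail₂] at heq
    have hu : u₁ = u₂ := List.append_cancel_right heq.1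
    have hd₁ : r₁ = r₁.dropLast ++ [w] := eq_dropLast_concat h1B.1.2.2.1
    have hd₂ : r₂ = r₂.dropLast ++ [w] := eq_dropLast_concat h2B.1.2.2.1
    have hwd₁ : w ∉ r₁.dropLast := by
      intro hmem
      have hnd := h1B.1.2.2.2
      rw [hd₁, List.nodup_append] at hnd
      exact hnd.2.2 w hmem w (by simp) rfl
    have hwd₂ : w ∉ r₂.dropLast := by
      intro hmem
      have hnd := h2B.1.2.2.2
      rw [hd₂, List.nodup_append] at hnd
      exact hnd.2.2 w hmem w (by simp) rfl
    have he2 : r₁.dropLast ++ w :: v₁ = r₂.dropLast ++ w :: v₂ := by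
      have h := heq.2
      rw [hd₁, hd₂] at h
      simpa using h
    have hdd : r₁.dropLast = r₂.dropLast := by
      have hc1 := cut_append (x := w) hwd₁ v₁
      have hc2 := cut_append (x := w) hwd₂ v₂
      rw [← hc1, ← hc2, he2]
    have hvv : v₁ = v₂ := by
      have ht1 := tailAfter_append (x := w) hwd₁ v₁
      have ht2 := tailAfter_append (x := w) hwd₂ v₂
      rw [← ht1, ← ht2, he2]
    have hr : r₁ = r₂ := by rw [hd₁, hd₂, hdd]
    exact Prod.ext (by rw [hform₁, hform₂, hu, hvv]) hr
  have hsurj : C ×ˢ D ⊆ Φ '' (A ×ˢ B) := by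
    rintro ⟨q, p'⟩ ⟨hqC, hp'D⟩
    obtain ⟨hp', hwp'⟩ := hp'D
    have hsplit : p' = cut p' w ++ w :: tailAfter p' w := split_eq hwp'
    have hr : cut p' w ++ [w] ∈ G.SP s w := SP_of_prefix hp' hsplit
    have hqd : q = q.dropLast ++ [x] := eq_dropLast_concat hqC.1.2.2.1
    have hchwe : List.Chain' G.E (w :: tailAfter p' w) := by
      have hc := hp'.1.1
      rw [hsplit] at hc
      exact chain'_of_append_right hc
    have hlaste : (w :: tailAfter p' w).getLast? = some t := by
      have hl := hp'.1.2.2.1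
      rw [hsplit, getLast?_append_cons] at hl
      exact hl
    have hch : List.Chain' G.E (x :: w :: tailAfter p' w) :=
      List.isChain_cons_cons.mpr ⟨hx.1, hchwe⟩
    have hlast : (x :: w :: tailAfter p' w).getLast? = some t := by
      rw [List.getLast?_cons_cons]
      exact hlaste
    have hpwq : G.pw (cut p' w ++ [w]) = G.pw q + G.w x w := by
      have e1 := hr.2
      rw [← hx.2.1, ← hqC.2, ← EReal.coe_add] at e1
      exact_mod_cast e1
    have hpwp' : G.pw p' = G.pw (cut p' w ++ [w]) + G.pw (w :: tailAfter p' w) := by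
      conv_lhs => rw [hsplit]
      exact pw_append_cons _ w _
    have hweight : ((G.pw q + G.pw (x :: w :: tailAfter p' w) : ℝ) : EReal) = G.dist s t := by
      have : G.pw q + G.pw (x :: w :: tailAfter p' w) = G.pw p' := by
        rw [pw_cons_cons, hpwp', hpwq]
        ring
      rw [this]
      exact hp'.2
    have hpSP : q ++ (w :: tailAfter p' w) ∈ G.SP s t := join_SP hqC hch hlast hweight
    have hinfix : [x, w] <:+: q ++ w :: tailAfter p' w := by
      refine ⟨q.dropLast, tailAfter p' w, ?_⟩
      conv_rhs => rw [hqd]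
      simp
    refine ⟨(q ++ w :: tailAfter p' w, cut p' w ++ [w]), ⟨⟨hpSP, hinfix⟩, hr⟩, ?_⟩
    rw [hPhi]
    simp only
    have hxq : x ∉ q.dropLast := by
      intro hmem
      have hnd := hqC.1.2.2.2
      rw [hqd, List.nodup_append] at hnd
      exact hnd.2.2 x hmem x (by simp) rfl
    have hfirst : cut (q ++ w :: tailAfter p' w) x ++ [x] = q := by
      have hqform : q ++ w :: tailAfter p' w = q.dropLast ++ x :: (w :: tailAfter p' w) := by
        conv_lhs => rw [hqd]
        simp
      rw [hqform, cut_append hxq, ← hqd]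
    have hwq : w ∉ q := not_mem_SP_pred hx hqC
    have hsecond : (cut p' w ++ [w]) ++ tailAfter (q ++ w :: tailAfter p' w) w = p' := by
      rw [tailAfter_append hwq]
      conv_rhs => rw [hsplit]
      simp
    rw [hfirst, hsecond]
  have himage : Φ '' (A ×ˢ B) = C ×ˢ D :=
    Set.Subset.antisymm (by rintro _ ⟨pr, hpr, rfl⟩; exact himg pr hpr) hsurj
  have hcount : (A ×ˢ B).ncard = (C ×ˢ D).ncard := by
    rw [← himage, Set.ncard_image_of_injOn hinj]
  rw [ncard_prod, ncard_prod] at hcount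
  exact hcount

lemma finsum_mem_toFinset {S : Set V} (f : V → ℝ) :
    ∑ᶠ i ∈ S, f i = ∑ i ∈ (Set.toFinite S).toFinset, f i := by
  rw [← finsum_mem_coe_finset]
  rw [Set.Finite.coe_toFinset]

end Brandes
/-- **Brandes's dependency recursion.** For every `s, x ∈ V` with
`x ≠ s`: `δ_{s•}(x) = Σ_{w : x ∈ P_s(w)} (σ_{sx}/σ_{sw}) · (1 + δ_{s•}(w))`. -/
theorem delta_recursion (G : WDigraph V) (s x : V) (hxs : x ≠ s) :
    G.delta s x =
      ∑ᶠ w ∈ {w : V | x ∈ G.pred s w},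
        (G.sigma s x : ℝ) / (G.sigma s w : ℝ) * (1 + G.delta s w) := by
  classical
  rw [finsum_mem_toFinset]
  set W := (Set.toFinite {w : V | x ∈ G.pred s w}).toFinset with hWdef
  have hWmem : ∀ w, w ∈ W ↔ x ∈ G.pred s w := by
    intro w; rw [hWdef, Set.Finite.mem_toFinset]; rfl
  set T := (Set.toFinite {t : V | t ≠ s ∧ t ≠ x}).toFinset with hTdef
  have hTmem : ∀ t, t ∈ T ↔ t ≠ s ∧ t ≠ x := by
    intro t; rw [hTdef, Set.Finite.mem_toFinset]; rfl
  have hLHS : G.delta s x = ∑ t ∈ T, (G.sigmaV s t x : ℝ) / (G.sigma s t : ℝ) := by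
    rw [delta, finsum_mem_toFinset]
  rw [hLHS]
  have step1 : ∀ t ∈ T, (G.sigmaV s t x : ℝ) / (G.sigma s t : ℝ)
      = ∑ w ∈ W, (G.sigmaE s t x w : ℝ) / (G.sigma s t : ℝ) := by
    intro t ht
    rw [sigmaV_eq_sum G s t x (fun h => ((hTmem t).mp ht).2 h.symm)]
    rw [Nat.cast_sum, Finset.sum_div]
  rw [Finset.sum_congr rfl step1, Finset.sum_comm]
  refine Finset.sum_congr rfl ?_
  intro w hw
  have hpred : x ∈ G.pred s w := (hWmem w).mp hw
  have hwx : w ≠ x := pred_ne hpred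
  have hws : w ≠ s := pred_ne_src hpred
  have hwT : w ∈ T := (hTmem w).mpr ⟨hws, hwx⟩
  obtain ⟨r0, hr0⟩ := exists_SP hpred.2.2
  have hsw0 : (G.sigma s w : ℝ) ≠ 0 := Nat.cast_ne_zero.mpr (sigma_ne_zero hr0)
  have hterm : (G.sigmaE s w x w : ℝ) / (G.sigma s w : ℝ)
      = (G.sigma s x : ℝ) / (G.sigma s w : ℝ) := by
    have h2 := sigmaE_mul_sigma hpred w
    rw [sigmaV_last] at h2
    have h2' : G.sigmaE s w x w = G.sigma s x :=
      Nat.eq_of_mul_eq_mul_right (Nat.pos_of_ne_zero (sigma_ne_zero hr0)) h2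
    rw [h2']
  have hgen : ∀ t, (G.sigmaE s t x w : ℝ) / (G.sigma s t : ℝ)
      = (G.sigma s x : ℝ) / (G.sigma s w : ℝ)
        * ((G.sigmaV s t w : ℝ) / (G.sigma s t : ℝ)) := by
    intro t
    have h2 := sigmaE_mul_sigma hpred t
    have h2r : (G.sigmaE s t x w : ℝ) * (G.sigma s w : ℝ)
        = (G.sigma s x : ℝ) * (G.sigmaV s t w : ℝ) := by exact_mod_cast h2
    have hE : (G.sigmaE s t x w : ℝ)
        = (G.sigma s x : ℝ) * (G.sigmaV s t w : ℝ) / (G.sigma s w : ℝ) := by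
      rw [eq_div_iff hsw0]; exact h2r
    rw [hE, div_div, div_mul_div_comm]
  rw [Finset.sum_eq_sum_sdiff_singleton_add hwT, hterm]
  rw [Finset.sum_congr rfl (fun t _ => hgen t), ← Finset.mul_sum]
  have hdelta : G.delta s w = ∑ t ∈ T \ {w}, (G.sigmaV s t w : ℝ) / (G.sigma s t : ℝ) := by
    rw [delta, finsum_mem_toFinset]
    set Tw := (Set.toFinite {t : V | t ≠ s ∧ t ≠ w}).toFinset with hTwdef
    have hTwmem : ∀ t, t ∈ Tw ↔ t ≠ s ∧ t ≠ w := by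
      intro t; rw [hTwdef, Set.Finite.mem_toFinset]; rfl
    have hxTw : x ∈ Tw := (hTwmem x).mpr ⟨hxs, fun h => hwx h.symm⟩
    rw [Finset.sum_eq_sum_sdiff_singleton_add hxTw]
    have hset : Tw \ {x} = T \ {w} := by
      ext t
      simp only [Finset.mem_sdiff, Finset.mem_singleton, hTwmem, hTmem]
      tauto
    rw [hset, sigmaV_pred_zero hpred]
    simp
  rw [← hdelta]
  ring

end WDigraph
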